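/- Assume $(b_n)$ is log-concave ($b_n^2 \geq b_{n-1}b_{n+1}$ for $n\geq 1$) and strictly increasing, and let $q_n = b_{n-1}/b_n$. Then $0 < q_n \leq q_{n+1} < 1$, and the coefficients satisfy $u_{n,k} \leq q_n^{k^2}/(q_n^2; q_n^2)_k$ for all $n \geq 1$, $k \geq 0$, where $(z;q)_k = \prod_{j=0}^{k-1}(1-zq^j)$. -/

import Mathlib

/-- The coefficients `u_{n,k}` of `x^n/(b_0⋯b_{n-1})` in the basis `P_{n-2k}`,
defined via their recurrence (`b_m = 0` for `m < 0`, `u_{n,k} = 0` for `k < 0`). -/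
noncomputable def usec (b : ℕ → ℝ) : ℕ → ℕ → ℝ
  | 0, 0 => 1
  | 0, _ + 1 => 0
  | n + 1, 0 => usec b n 0
  | n + 1, k + 1 =>
      ((if 2 * (k + 1) ≤ n then b (n - 2 * (k + 1)) else 0) * usec b n (k + 1) +
        (if 2 * (k + 1) ≤ n + 1 then b (n + 1 - 2 * (k + 1)) else 0) * usec b n k) / b n

/-- The bound function `q^{k²}/(q²;q²)_k`. -/
noncomputable def Bnd (q : ℝ) (k : ℕ) : ℝ :=
  q ^ (k ^ 2) / ∏ j ∈ Finset.range k, (1 - q ^ (2 * j + 2))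

lemma usec_zero (b : ℕ → ℝ) : ∀ n, usec b n 0 = 1
  | 0 => rfl
  | n + 1 => by rw [usec]; exact usec_zero b n

lemma usec_nonneg (b : ℕ → ℝ) (hb : ∀ n, 0 < b n) : ∀ n k, 0 ≤ usec b n k
  | 0, 0 => by rw [usec]; norm_num
  | 0, k + 1 => by rw [usec]
  | n + 1, 0 => by rw [usec]; exact usec_nonneg b hb n 0
  | n + 1, k + 1 => by
      rw [usec]
      apply div_nonneg _ (hb n).le
      refine add_nonneg (mul_nonneg ?_ (usec_nonneg b hb n (k + 1)))
        (mul_nonneg ?_ (usec_nonneg b hb n k)) <;>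
      · split
        · exact (hb _).le
        · exact le_refl 0

lemma Dpos {q : ℝ} (h0 : 0 < q) (h1 : q < 1) (k : ℕ) :
    0 < ∏ j ∈ Finset.range k, (1 - q ^ (2 * j + 2)) := by
  apply Finset.prod_pos
  intro j _
  have : q ^ (2 * j + 2) < 1 := pow_lt_one₀ h0.le h1 (by omega)
  linarith

lemma Bpos {q : ℝ} (h0 : 0 < q) (h1 : q < 1) (k : ℕ) : 0 < Bnd q k :=
  div_pos (pow_pos h0 _) (Dpos h0 h1 k)

lemma Bmono {q q' : ℝ} (h0 : 0 < q) (hqq : q ≤ q') (h1 : q' < 1) (k : ℕ) :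
    Bnd q k ≤ Bnd q' k := by
  apply div_le_div₀ (pow_pos (lt_of_lt_of_le h0 hqq) _).le
    (pow_le_pow_left₀ h0.le hqq _) (Dpos (lt_of_lt_of_le h0 hqq) h1 k)
  apply Finset.prod_le_prod
  · intro j _
    have : q' ^ (2 * j + 2) < 1 := pow_lt_one₀ (lt_of_lt_of_le h0 hqq).le h1 (by omega)
    linarith
  · intro j _
    have := pow_le_pow_left₀ h0.le hqq (2 * j + 2)
    linarith

lemma Brec {q : ℝ} (h0 : 0 < q) (h1 : q < 1) (k : ℕ) :
    q ^ (2 * k + 1) * Bnd q k = (1 - q ^ (2 * k + 2)) * Bnd q (k + 1) := by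
  unfold Bnd
  rw [Finset.prod_range_succ, show (k + 1) ^ 2 = k ^ 2 + (2 * k + 1) by ring, pow_add]
  have hD := (Dpos h0 h1 k).ne'
  have h2 : (1 : ℝ) - q ^ (2 * k + 2) ≠ 0 := by
    have : q ^ (2 * k + 2) < 1 := pow_lt_one₀ h0.le h1 (by omega)
    linarith
  field_simp
  ring

section main
variable (b : ℕ → ℝ) (hb : ∀ n, 0 < b n) (hmono : StrictMono b)
  (hlc : ∀ n : ℕ, b n * b (n + 2) ≤ b (n + 1) ^ 2)

include hb hlc in
lemma Qmono : Monotone (fun i => b i / b (i + 1)) := by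
  apply monotone_nat_of_le_succ
  intro i
  rw [div_le_div_iff₀ (hb _) (hb _)]
  nlinarith [hlc i]

include hb hlc in
lemma ratio : ∀ d m, b m / b (m + d) ≤ (b (m + d) / b (m + d + 1)) ^ d := by
  intro d
  induction d with
  | zero => intro m; simp [div_self (hb m).ne']
  | succ d ih =>
    intro m
    have e1 : m + 1 + d = m + d + 1 := by omega
    have key := ih (m + 1)
    rw [e1] at key
    have step1 : b m / b (m + (d + 1)) = b m / b (m + 1) * (b (m + 1) / b (m + d + 1)) := by
      rw [div_mul_div_comm, mul_comm (b m) _, mul_div_mul_left _ _ (hb (m + 1)).ne']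
      rfl
    rw [step1, pow_succ']
    apply mul_le_mul (Qmono b hb hlc (show m ≤ m + d + 1 by omega)) key
      (div_nonneg (hb _).le (hb _).le) (div_nonneg (hb _).le (hb _).le)

include hb hmono hlc in
lemma key_bound : ∀ n k, usec b (n + 1) k ≤ Bnd (b n / b (n + 1)) k := by
  have hq : ∀ n, 0 < b n / b (n + 1) := fun n => div_pos (hb n) (hb (n + 1))
  have hq1 : ∀ n, b n / b (n + 1) < 1 := fun n => (div_lt_one (hb _)).2 (hmono (lt_add_one n))
  intro n
  induction n with
  | zero =>
    intro k
    match k with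
    | 0 => rw [usec_zero]; simp [Bnd]
    | k + 1 =>
      have h0 : usec b 1 (k + 1) = 0 := by
        rw [usec]
        have : ¬ 2 * (k + 1) ≤ 0 := by omega
        have : ¬ 2 * (k + 1) ≤ 1 := by omega
        simp_all
      rw [h0]
      exact (Bpos (hq 0) (hq1 0) _).le
  | succ n ih =>
    intro k
    match k with
    | 0 => rw [usec_zero]; simp [Bnd]
    | k + 1 =>
      set q := b (n + 1) / b (n + 2) with hqdef
      set c1 : ℝ := if 2 * (k + 1) ≤ n + 1 then b (n + 1 - 2 * (k + 1)) else 0 with hc1def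
      set c2 : ℝ := if 2 * (k + 1) ≤ n + 2 then b (n + 2 - 2 * (k + 1)) else 0 with hc2def
      have hrw : usec b (n + 2) (k + 1) =
          c1 / b (n + 1) * usec b (n + 1) (k + 1) + c2 / b (n + 1) * usec b (n + 1) k := by
        rw [usec, add_div, mul_div_right_comm, mul_div_right_comm]
      have hc1 : c1 / b (n + 1) ≤ q ^ (2 * k + 2) := by
        rw [hc1def]
        split
        · rename_i h
          set m := n + 1 - 2 * (k + 1) with hm
          have hmd : m + 2 * (k + 1) = n + 1 := by omega
          have := ratio b hb hlc (2 * (k + 1)) m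
          rw [hmd] at this
          rw [show 2 * k + 2 = 2 * (k + 1) by ring]
          exact this
        · rw [zero_div]; exact (pow_pos (hq (n + 1)) _).le
      have hc2 : c2 / b (n + 1) ≤ q ^ (2 * k + 1) := by
        rw [hc2def]
        split
        · rename_i h
          set m := n + 2 - 2 * (k + 1) with hm
          have hmd : m + (2 * k + 1) = n + 1 := by omega
          have := ratio b hb hlc (2 * k + 1) m
          rw [hmd] at this
          exact this
        · rw [zero_div]; exact (pow_pos (hq (n + 1)) _).le
      have hBn1 : Bnd (b n / b (n + 1)) (k + 1) ≤ Bnd q (k + 1) :=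
        Bmono (hq n) (Qmono b hb hlc (Nat.le_succ n)) (hq1 (n + 1)) _
      have hBn2 : Bnd (b n / b (n + 1)) k ≤ Bnd q k :=
        Bmono (hq n) (Qmono b hb hlc (Nat.le_succ n)) (hq1 (n + 1)) _
      have hu1 := usec_nonneg b hb (n + 1) (k + 1)
      have hu2 := usec_nonneg b hb (n + 1) k
      have step1 : usec b (n + 2) (k + 1) ≤
          q ^ (2 * k + 2) * Bnd q (k + 1) + q ^ (2 * k + 1) * Bnd q k := by
        rw [hrw]
        apply add_le_add
        · exact mul_le_mul hc1 ((ih (k + 1)).trans hBn1) hu1 (pow_pos (hq (n + 1)) _).le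
        · exact mul_le_mul hc2 ((ih k).trans hBn2) hu2 (pow_pos (hq (n + 1)) _).le
      have hrec := Brec (hq (n + 1)) (hq1 (n + 1)) k
      calc usec b (n + 2) (k + 1)
          ≤ q ^ (2 * k + 2) * Bnd q (k + 1) + q ^ (2 * k + 1) * Bnd q k := step1
        _ = Bnd q (k + 1) := by rw [hrec]; ring

end main

/-- if `(b_n)` is log-concave and strictly increasing then, with
`q_n = b_{n-1}/b_n`, one has `0 < q_n ≤ q_{n+1} < 1` and
`u_{n,k} ≤ q_n^{k²}/(q_n²;q_n²)_k` for `n ≥ 1`, `k ≥ 0`. -/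
theorem stmt6 (b : ℕ → ℝ) (hb : ∀ n, 0 < b n) (hmono : StrictMono b)
    (hlc : ∀ n : ℕ, b n * b (n + 2) ≤ b (n + 1) ^ 2) :
    (∀ n : ℕ, 1 ≤ n →
      0 < b (n - 1) / b n ∧ b (n - 1) / b n ≤ b n / b (n + 1) ∧ b (n - 1) / b n < 1) ∧
    (∀ n k : ℕ, 1 ≤ n → usec b n k ≤
      (b (n - 1) / b n) ^ (k ^ 2) /
        ∏ j ∈ Finset.range k, (1 - (b (n - 1) / b n) ^ (2 * j + 2))) := by
  constructor
  · intro n hn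
    obtain ⟨m, rfl⟩ : ∃ m, n = m + 1 := ⟨n - 1, by omega⟩
    simp only [Nat.add_sub_cancel]
    refine ⟨div_pos (hb m) (hb (m + 1)), Qmono b hb hlc (Nat.le_succ m),
      (div_lt_one (hb _)).2 (hmono (lt_add_one m))⟩
  · intro n k hn
    obtain ⟨m, rfl⟩ : ∃ m, n = m + 1 := ⟨n - 1, by omega⟩
    simp only [Nat.add_sub_cancel]
    have := key_bound b hb hmono hlc m k
    simpa [Bnd] using this
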